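/- Fix 0 < R < 1 and ε > 0 with 1 - R - ε > 0, a positive integer ℓ, and a prime power q with q ≥ max(ℓ^{8R/ε + 6}, ℓ·2^{4/ε}). Let n be a positive integer with Rn an integer, and let C ⊆ F_q^n be a random linear code of rate R. Then with probability at least 1 - q^{-nℓ/4}, the following holds: for every choice of input lists S_1,…,S_n ⊆ F_q with |S_i| = ℓ for all i, every linearly independent subset of C contained in the (1-R-ε)-radius list-recovery ball B(1-R-ε, S_1×⋯×S_n) has size strictly less than 2ℓ/ε. -/

import Mathlib

/-- The agreement set `agr(x, S₁,…,Sₙ) = {i : xᵢ ∈ Sᵢ}`. -/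
def agr {F : Type*} [DecidableEq F] {n : ℕ} (x : Fin n → F) (S : Fin n → Finset F) :
    Finset (Fin n) :=
  Finset.univ.filter fun i => x i ∈ S i


open Finset Matrix

section aux
variable {F : Type*} [Field F] [Fintype F] [DecidableEq F]

lemma row_fiber_card {k m : ℕ} (u : Fin m → (Fin k → F)) (hu : LinearIndependent F u)
    (c : Fin m → F) :
    (Finset.univ.filter fun g : Fin k → F => ∀ j, g ⬝ᵥ u j = c j).card
      * Fintype.card F ^ m = Fintype.card F ^ k := by
  classical
  set M : Matrix (Fin k) (Fin m) F := Matrix.of (fun t j => u j t) with hM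
  set φ : (Fin k → F) →ₗ[F] (Fin m → F) := M.vecMulLinear with hφ
  have hφapp : ∀ (g : Fin k → F) (j : Fin m), φ g j = g ⬝ᵥ u j := by
    intro g j
    simp [hφ, hM, Matrix.vecMul, dotProduct]
  -- surjectivity of φ
  have hsurj : Function.Surjective φ := by
    intro c'
    set W : Subspace F (Fin k → F) := Submodule.span F (Set.range u) with hW
    set b : Module.Basis (Fin m) F W := Module.Basis.span hu with hb
    set f : W →ₗ[F] F := b.constr F c' with hf
    set g' : Module.Dual F (Fin k → F) := W.dualLift f with hg'
    have hmem : ∀ j, u j ∈ W := fun j => Submodule.subset_span ⟨j, rfl⟩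
    have hval : ∀ j, g' (u j) = c' j := by
      intro j
      rw [hg', Subspace.dualLift_of_mem (hmem j)]
      have : (⟨u j, hmem j⟩ : W) = b j := by
        apply Subtype.ext
        exact congrArg Subtype.val (Module.Basis.span_apply hu j).symm
      rw [this, hf, Module.Basis.constr_basis]
    refine ⟨fun t => g' (fun s => if t = s then 1 else 0), ?_⟩
    funext j
    rw [hφapp]
    have := LinearMap.pi_apply_eq_sum_univ g' (u j)
    rw [dotProduct]
    rw [this] at *
    rw [← hval j, LinearMap.pi_apply_eq_sum_univ g' (u j)]
    refine Finset.sum_congr rfl fun t _ => ?_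
    rw [smul_eq_mul, mul_comm]
  -- all fibers of φ have the same cardinality
  have hfib : ∀ c₁ c₂ : Fin m → F,
      (Finset.univ.filter fun g => φ g = c₁).card
        = (Finset.univ.filter fun g => φ g = c₂).card := by
    intro c₁ c₂
    obtain ⟨w₁, hw₁⟩ := hsurj c₁
    obtain ⟨w₂, hw₂⟩ := hsurj c₂
    apply Finset.card_bij' (fun g _ => g - w₁ + w₂) (fun g _ => g - w₂ + w₁)
    · intro g hg
      simp only [mem_filter, mem_univ, true_and] at hg ⊢
      simp [map_add, map_sub, hg, hw₁, hw₂]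
    · intro g hg
      simp only [mem_filter, mem_univ, true_and] at hg ⊢
      simp [map_add, map_sub, hg, hw₁, hw₂]
    · intro g _; abel
    · intro g _; abel
  -- fiberwise counting
  have hcount : Fintype.card F ^ k
      = ∑ c' : Fin m → F, (Finset.univ.filter fun g => φ g = c').card := by
    rw [← Finset.card_eq_sum_card_fiberwise (f := φ) (fun g _ => Finset.mem_univ (φ g))]
    simp [Fintype.card_fun]
  have hset : (Finset.univ.filter fun g : Fin k → F => ∀ j, g ⬝ᵥ u j = c j)
      = Finset.univ.filter fun g => φ g = c := by
    apply Finset.filter_congr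
    intro g _
    simp only [funext_iff, hφapp]
  rw [hset, hcount]
  rw [Finset.sum_congr rfl (fun c' _ => hfib c' c)]
  simp [Fintype.card_fun, mul_comm]

lemma matrix_fiber_card {n k m : ℕ} (u : Fin m → (Fin k → F)) (hu : LinearIndependent F u)
    (x : Fin m → (Fin n → F)) :
    (Finset.univ.filter fun G : Matrix (Fin n) (Fin k) F => ∀ j, G.mulVec (u j) = x j).card
      * Fintype.card F ^ (m * n) = Fintype.card F ^ (k * n) := by
  classical
  have hstep : (Finset.univ.filter fun G : Matrix (Fin n) (Fin k) F =>
        ∀ j, G.mulVec (u j) = x j).card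
      = ∏ i : Fin n, (Finset.univ.filter fun g : Fin k → F => ∀ j, g ⬝ᵥ u j = x j i).card := by
    rw [← Fintype.card_piFinset]
    apply Finset.card_bij (fun G _ => (fun i => G i : ∀ _ : Fin n, Fin k → F))
    · intro G hG
      simp only [mem_filter, mem_univ, true_and] at hG
      rw [Fintype.mem_piFinset]
      intro i
      simp only [mem_filter, mem_univ, true_and]
      intro j
      have := congrFun (hG j) i
      simpa [Matrix.mulVec, dotProduct] using this
    · intro G₁ _ G₂ _ h
      funext i j
      exact congrFun (congrFun h i) j
    · intro y hy
      rw [Fintype.mem_piFinset] at hy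
      refine ⟨Matrix.of (fun i j => y i j), ?_, rfl⟩
      simp only [mem_filter, mem_univ, true_and]
      intro j
      funext i
      have := (hy i)
      simp only [mem_filter, mem_univ, true_and] at this
      simpa [Matrix.mulVec, dotProduct] using this j
  rw [hstep]
  have : (Fintype.card F) ^ (m * n) = ∏ _i : Fin n, Fintype.card F ^ m := by
    simp [Finset.prod_const, ← pow_mul]
  rw [this, ← Finset.prod_mul_distrib]
  have : ∀ i : Fin n,
      (Finset.univ.filter fun g : Fin k → F => ∀ j, g ⬝ᵥ u j = x j i).card
        * Fintype.card F ^ m = Fintype.card F ^ k :=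
    fun i => row_fiber_card u hu _
  rw [Finset.prod_congr rfl (fun i _ => this i)]
  simp [Finset.prod_const, ← pow_mul]

lemma term_le {ℓ q n j : ℕ} (θ : ℝ) (hl1 : (1:ℝ) ≤ (ℓ:ℝ)) (hlq : (ℓ:ℝ) ≤ (q:ℝ))
    (hj : θ * n ≤ (j:ℝ)) (hjn : j ≤ n) :
    ((ℓ:ℝ)) ^ (j:ℕ) * ((q:ℝ)) ^ ((n-j : ℕ)) ≤ (ℓ:ℝ) ^ (θ*n : ℝ) * (q:ℝ) ^ ((1-θ)*(n:ℝ) : ℝ) := by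
  have hq0 : (0:ℝ) < q := lt_of_lt_of_le (by linarith) hlq
  have hl0 : (0:ℝ) < ℓ := by linarith
  have hb0 : (0:ℝ) < (ℓ:ℝ)/q := div_pos hl0 hq0
  have hb1 : (ℓ:ℝ)/q ≤ 1 := (div_le_one hq0).2 hlq
  have lhs_eq : ((ℓ:ℝ)) ^ (j:ℕ) * ((q:ℝ)) ^ ((n-j : ℕ))
      = (q:ℝ) ^ ((n:ℝ)) * ((ℓ:ℝ)/q) ^ ((j:ℝ)) := by
    rw [← Real.rpow_natCast (ℓ:ℝ) j, ← Real.rpow_natCast (q:ℝ) (n-j),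
      Nat.cast_sub hjn, Real.div_rpow hl0.le hq0.le, Real.rpow_sub hq0]
    field_simp
  have rhs_eq : (ℓ:ℝ) ^ (θ*n : ℝ) * (q:ℝ) ^ ((1-θ)*(n:ℝ) : ℝ)
      = (q:ℝ) ^ ((n:ℝ)) * ((ℓ:ℝ)/q) ^ ((θ*n : ℝ)) := by
    rw [Real.div_rpow hl0.le hq0.le]
    have : (1-θ)*(n:ℝ) = (n:ℝ) - θ*n := by ring
    rw [this, Real.rpow_sub hq0]
    field_simp
  rw [lhs_eq, rhs_eq]
  apply mul_le_mul_of_nonneg_left _ (Real.rpow_nonneg hq0.le _)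
  exact Real.rpow_le_rpow_of_exponent_ge hb0 hb1 hj

/-- Counting vectors with large agreement with a fixed list family. -/
lemma ball_card_le {n ℓ : ℕ} (θ : ℝ) (hl1 : (1:ℝ) ≤ (ℓ:ℝ))
    (hlq : (ℓ:ℝ) ≤ (Fintype.card F : ℝ))
    (S : Fin n → Finset F) (hS : ∀ i, (S i).card = ℓ) :
    ((Finset.univ.filter fun x : Fin n → F => θ * n ≤ ((agr x S).card : ℝ)).card : ℝ)
      ≤ 2 ^ n * (ℓ : ℝ) ^ (θ * n : ℝ) * (Fintype.card F : ℝ) ^ ((1 - θ) * (n:ℝ) : ℝ) := by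
  classical
  set q := Fintype.card F with hq
  have hsub : (Finset.univ.filter fun x : Fin n → F => θ * n ≤ ((agr x S).card : ℝ))
      ⊆ (Finset.univ.powerset.filter fun A : Finset (Fin n) => θ * n ≤ (A.card : ℝ)).biUnion
          (fun A => Fintype.piFinset fun i => if i ∈ A then S i else Finset.univ) := by
    intro x hx
    simp only [mem_filter, mem_univ, true_and] at hx
    rw [Finset.mem_biUnion]
    refine ⟨agr x S, ?_, ?_⟩
    · simp only [mem_filter, Finset.mem_powerset]
      exact ⟨Finset.subset_univ _, hx⟩
    · rw [Fintype.mem_piFinset]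
      intro i
      by_cases h : i ∈ agr x S
      · simp only [h, if_true]
        simpa [agr] using h
      · simp [h]
  have hcount : ∀ A : Finset (Fin n),
      (Fintype.piFinset fun i => if i ∈ A then S i else (Finset.univ : Finset F)).card
        = ℓ ^ A.card * q ^ (n - A.card) := by
    intro A
    rw [Fintype.card_piFinset]
    have : ∀ i : Fin n, (if i ∈ A then S i else (Finset.univ : Finset F)).card
        = if i ∈ A then ℓ else q := by
      intro i; by_cases h : i ∈ A <;> simp [h, hS, hq]
    rw [Finset.prod_congr rfl (fun i _ => this i), Finset.prod_ite]
    simp only [Finset.prod_const]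
    congr 1
    · congr 1
      simp [Finset.filter_univ_mem]
    · have : Finset.univ.filter (fun i => i ∉ A) = Aᶜ := by ext i; simp
      rw [this, Finset.card_compl, Fintype.card_fin]
  calc ((Finset.univ.filter fun x : Fin n → F => θ * n ≤ ((agr x S).card : ℝ)).card : ℝ)
      ≤ ((Finset.univ.powerset.filter fun A : Finset (Fin n) => θ * n ≤ (A.card : ℝ)).biUnion
          (fun A => Fintype.piFinset fun i => if i ∈ A then S i else Finset.univ)).card := by
        exact_mod_cast Nat.cast_le.2 (Finset.card_le_card hsub)
    _ ≤ ∑ A ∈ (Finset.univ.powerset.filter fun A : Finset (Fin n) => θ * n ≤ (A.card : ℝ)),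
          ((Fintype.piFinset fun i => if i ∈ A then S i else (Finset.univ : Finset F)).card : ℝ) := by
        exact_mod_cast Nat.cast_le.2 (Finset.card_biUnion_le)
    _ ≤ ∑ A ∈ (Finset.univ.powerset.filter fun A : Finset (Fin n) => θ * n ≤ (A.card : ℝ)),
          ((ℓ : ℝ) ^ (θ * n : ℝ) * (q : ℝ) ^ ((1 - θ) * (n:ℝ) : ℝ)) := by
        apply Finset.sum_le_sum
        intro A hA
        simp only [mem_filter, Finset.mem_powerset] at hA
        rw [hcount A]
        push_cast
        exact term_le θ hl1 hlq hA.2 (Finset.card_le_card (Finset.subset_univ A) |>.trans_eq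
          (by simp))
    _ ≤ 2 ^ n * ((ℓ : ℝ) ^ (θ * n : ℝ) * (q : ℝ) ^ ((1 - θ) * (n:ℝ) : ℝ)) := by
        rw [Finset.sum_const, nsmul_eq_mul]
        apply mul_le_mul_of_nonneg_right
        · calc ((Finset.univ.powerset.filter fun A : Finset (Fin n) => θ * n ≤ (A.card : ℝ)).card : ℝ)
              ≤ ((Finset.univ : Finset (Fin n)).powerset.card : ℝ) :=
                Nat.cast_le.2 (Finset.card_le_card (Finset.filter_subset _ _))
          _ = 2 ^ n := by rw [Finset.card_powerset]; simp
        · positivity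
    _ = 2 ^ n * (ℓ : ℝ) ^ (θ * n : ℝ) * (q : ℝ) ^ ((1 - θ) * (n:ℝ) : ℝ) := by ring

end aux


set_option maxHeartbeats 1000000 in
/-- With probability at least `1 - q^{-nℓ/4}` over the uniformly random generator matrix
`G ∈ F_q^{n × Rn}`, for every choice of input lists `S₁,…,Sₙ ⊆ F_q` of size `ℓ`, every
linearly independent subset of the random linear code contained in the `(1-R-ε)`-radius
list-recovery ball has size strictly less than `2ℓ/ε`. -/
theorem random_linear_code_few_independent_codewords_in_list_recovery_ball
    (R ε : ℝ) (hR0 : 0 < R) (hR1 : R < 1) (hε : 0 < ε) (hcap : 0 < 1 - R - ε)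
    (ℓ : ℕ) (hℓ : 0 < ℓ) (q : ℕ)
    (F : Type*) [Field F] [Fintype F] [DecidableEq F] (hF : Fintype.card F = q)
    (hq1 : ((ℓ : ℝ)) ^ (8 * R / ε + 6 : ℝ) ≤ (q : ℝ))
    (hq2 : (ℓ : ℝ) * (2 : ℝ) ^ (4 / ε : ℝ) ≤ (q : ℝ))
    (n k : ℕ) (hn : 0 < n) (hk : (k : ℝ) = R * n) :
    1 - (q : ℝ) ^ (-((n : ℝ) * (ℓ : ℝ)) / 4 : ℝ) ≤
      (({G : Matrix (Fin n) (Fin k) F |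
          ∀ S : Fin n → Finset F, (∀ i, (S i).card = ℓ) →
            ∀ T : Finset (Fin n → F),
              (↑T : Set (Fin n → F)) ⊆ (LinearMap.range (Matrix.mulVecLin G) : Set (Fin n → F)) →
              (∀ x ∈ T, (1 - (1 - R - ε)) * (n : ℝ) ≤ ((agr x S).card : ℝ)) →
              LinearIndependent F (fun x : {y // y ∈ T} => (x : Fin n → F)) →
              (T.card : ℝ) < 2 * (ℓ : ℝ) / ε}).ncard : ℝ) /
        ((Fintype.card (Matrix (Fin n) (Fin k) F)) : ℝ) := by
  classical
  -- basic numeric facts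
  have hε1 : ε < 1 := by linarith
  have hl1 : (1:ℝ) ≤ (ℓ:ℝ) := by exact_mod_cast hℓ
  have hexp1 : (1:ℝ) ≤ 8 * R / ε + 6 := by
    have : 0 < 8 * R / ε := by positivity
    linarith
  have hlq : (ℓ:ℝ) ≤ (q:ℝ) := by
    calc (ℓ:ℝ) = (ℓ:ℝ) ^ (1:ℝ) := (Real.rpow_one _).symm
      _ ≤ (ℓ:ℝ) ^ (8 * R / ε + 6 : ℝ) := Real.rpow_le_rpow_of_exponent_le hl1 hexp1
      _ ≤ (q:ℝ) := hq1
  have hQ2 : (2:ℝ) ≤ (q:ℝ) := by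
    have h24 : (2:ℝ) = (2:ℝ) ^ (1:ℝ) := (Real.rpow_one _).symm
    have h4e : (1:ℝ) ≤ 4 / ε := by
      rw [le_div_iff₀ hε]; linarith
    calc (2:ℝ) = (2:ℝ) ^ (1:ℝ) := (Real.rpow_one _).symm
      _ ≤ (2:ℝ) ^ (4/ε : ℝ) := Real.rpow_le_rpow_of_exponent_le (by norm_num) h4e
      _ = 1 * (2:ℝ) ^ (4/ε : ℝ) := (one_mul _).symm
      _ ≤ (ℓ:ℝ) * (2:ℝ) ^ (4/ε : ℝ) := by
          apply mul_le_mul_of_nonneg_right hl1 (by positivity)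
      _ ≤ (q:ℝ) := hq2
  have hQ1 : (1:ℝ) < (q:ℝ) := by linarith
  have hQ0 : (0:ℝ) < (q:ℝ) := by linarith
  set Q : ℝ := (q:ℝ) with hQdef
  set t : ℝ := Real.logb Q (ℓ:ℝ) with htdef
  set s : ℝ := Real.logb Q 2 with hsdef
  have ht0 : 0 ≤ t := Real.logb_nonneg hQ1 hl1
  have hs0 : 0 ≤ s := Real.logb_nonneg hQ1 (by norm_num)
  have hl0 : (0:ℝ) < (ℓ:ℝ) := by linarith
  have hlt : (ℓ:ℝ) = Q ^ t := (Real.rpow_logb hQ0 hQ1.ne' hl0).symm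
  have h2s : (2:ℝ) = Q ^ s := (Real.rpow_logb hQ0 hQ1.ne' (by norm_num)).symm
  -- key exponent bounds
  have key1 : (8 * R / ε + 6) * t ≤ 1 := by
    have h1 : Real.logb Q ((ℓ:ℝ) ^ (8 * R / ε + 6 : ℝ)) ≤ Real.logb Q Q :=
      Real.logb_le_logb_of_le hQ1 (by positivity) (by rw [hQdef]; exact hq1)
    rw [Real.logb_self_eq_one hQ1] at h1
    calc (8 * R / ε + 6) * t = Real.logb Q ((ℓ:ℝ) ^ (8 * R / ε + 6 : ℝ)) := by
          rw [htdef, Real.logb, Real.logb, Real.log_rpow hl0]; ring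
      _ ≤ 1 := h1
  have key2 : t + (4/ε) * s ≤ 1 := by
    have h1 : Real.logb Q ((ℓ:ℝ) * (2:ℝ) ^ (4/ε : ℝ)) ≤ Real.logb Q Q :=
      Real.logb_le_logb_of_le hQ1 (by positivity) (by rw [hQdef]; exact hq2)
    rw [Real.logb_self_eq_one hQ1] at h1
    have hpow : Real.logb Q ((2:ℝ) ^ (4/ε : ℝ)) = (4/ε) * s := by
      rw [hsdef, Real.logb, Real.logb, Real.log_rpow (by norm_num : (0:ℝ) < 2)]
      ring
    calc t + (4/ε) * s = Real.logb Q ((ℓ:ℝ) * (2:ℝ) ^ (4/ε : ℝ)) := by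
          rw [Real.logb_mul (ne_of_gt hl0) (by positivity), hpow, htdef]
      _ ≤ 1 := h1
  have hst : s + t * (R + ε) ≤ 3 * ε / 8 := by
    have h1' : (8 * R + 6 * ε) * t ≤ ε := by
      have := mul_le_mul_of_nonneg_left key1 hε.le
      calc (8 * R + 6 * ε) * t = ε * ((8 * R / ε + 6) * t) := by field_simp; try ring
        _ ≤ ε * 1 := this
        _ = ε := mul_one ε
    have h2' : ε * t + 4 * s ≤ ε := by
      have := mul_le_mul_of_nonneg_left key2 hε.le
      calc ε * t + 4 * s = ε * (t + (4/ε) * s) := by field_simp; try ring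
        _ ≤ ε * 1 := this
        _ = ε := mul_one ε
    nlinarith [h1', h2', ht0, hs0]
  -- abbreviations
  set m : ℕ := ⌈2 * (ℓ:ℝ) / ε⌉₊ with hmdef
  have hm : 2 * (ℓ:ℝ) / ε ≤ (m:ℝ) := Nat.le_ceil _
  set P : Matrix (Fin n) (Fin k) F → Prop := fun G =>
    ∀ S : Fin n → Finset F, (∀ i, (S i).card = ℓ) →
      ∀ T : Finset (Fin n → F),
        (↑T : Set (Fin n → F)) ⊆ (LinearMap.range (Matrix.mulVecLin G) : Set (Fin n → F)) →
        (∀ x ∈ T, (1 - (1 - R - ε)) * (n : ℝ) ≤ ((agr x S).card : ℝ)) →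
        LinearIndependent F (fun x : {y // y ∈ T} => (x : Fin n → F)) →
        (T.card : ℝ) < 2 * (ℓ : ℝ) / ε with hP
  set SS : Finset (Fin n → Finset F) := univ.filter (fun S => ∀ i, (S i).card = ℓ) with hSS
  set UU : Finset (Fin m → Fin k → F) := univ.filter (fun u => LinearIndependent F u) with hUU
  set BallT : (Fin n → Finset F) → Finset (Fin m → Fin n → F) :=
    (fun S => univ.filter (fun x => ∀ j, (R + ε) * n ≤ ((agr (x j) S).card : ℝ))) with hBallT
  set Fib : (Fin m → Fin n → F) → (Fin m → Fin k → F) → Finset (Matrix (Fin n) (Fin k) F) :=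
    (fun x u => univ.filter (fun G => ∀ j, G.mulVec (u j) = x j)) with hFibdef
  -- inclusion of the bad event in the union
  have hincl : (univ.filter (fun G => ¬ P G)) ⊆
      SS.biUnion (fun S => (BallT S).biUnion (fun x => UU.biUnion (fun u => Fib x u))) := by
    intro G hG
    rw [mem_filter] at hG
    obtain ⟨-, hbad⟩ := hG
    simp only [hP] at hbad
    push_neg at hbad
    obtain ⟨S, hS, T, hTsub, hTagr, hTind, hTcard⟩ := hbad
    have hmT : m ≤ T.card := by
      rw [hmdef]
      exact Nat.ceil_le.2 hTcard
    obtain ⟨T', hT'sub, hT'card⟩ := Finset.exists_subset_card_eq hmT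
    have e : Fin m ≃ {y // y ∈ T'} := (finCongr hT'card.symm).trans T'.equivFin.symm
    set x : Fin m → (Fin n → F) := fun j => ((e j : {y // y ∈ T'}) : Fin n → F) with hx
    have hxT : ∀ j, x j ∈ T := fun j => hT'sub (e j).2
    have hxind : LinearIndependent F x := by
      have hι : Function.Injective (fun j => (⟨x j, hxT j⟩ : {y // y ∈ T})) := by
        intro j₁ j₂ h
        have hval : x j₁ = x j₂ := by simpa using h
        exact e.injective (Subtype.ext hval)
      have hcomp := hTind.comp (fun j => (⟨x j, hxT j⟩ : {y // y ∈ T})) hι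
      have heq : ((fun y : {y // y ∈ T} => (y : Fin n → F)) ∘
          (fun j => (⟨x j, hxT j⟩ : {y // y ∈ T}))) = x := rfl
      rwa [heq] at hcomp
    have hrange : ∀ j, ∃ v : Fin k → F, G.mulVecLin v = x j := by
      intro j
      have h1 : x j ∈ (↑T : Set (Fin n → F)) := Finset.mem_coe.2 (hxT j)
      exact hTsub h1
    choose u hu using hrange
    have huind : LinearIndependent F u := by
      apply LinearIndependent.of_comp (G.mulVecLin)
      have h1 : (G.mulVecLin ∘ u) = x := funext hu
      rw [h1]; exact hxind
    rw [Finset.mem_biUnion]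
    refine ⟨S, by rw [hSS, mem_filter]; exact ⟨mem_univ _, hS⟩, ?_⟩
    rw [Finset.mem_biUnion]
    refine ⟨x, ?_, ?_⟩
    · rw [hBallT]
      simp only [mem_filter, mem_univ, true_and]
      intro j
      have := hTagr (x j) (hxT j)
      have hre : (1 - (1 - R - ε)) = R + ε := by ring
      rwa [hre] at this
    rw [Finset.mem_biUnion]
    refine ⟨u, by rw [hUU, mem_filter]; exact ⟨mem_univ _, huind⟩, ?_⟩
    rw [hFibdef]
    simp only [mem_filter, mem_univ, true_and]
    intro j
    have := hu j
    rwa [Matrix.mulVecLin_apply] at this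
  -- counting, natural number stage
  have hnat : (univ.filter (fun G => ¬ P G)).card
      ≤ ∑ S ∈ SS, ∑ x ∈ BallT S, ∑ u ∈ UU, (Fib x u).card := by
    calc (univ.filter (fun G => ¬ P G)).card
        ≤ (SS.biUnion (fun S => (BallT S).biUnion (fun x =>
            UU.biUnion (fun u => Fib x u)))).card := Finset.card_le_card hincl
      _ ≤ ∑ S ∈ SS, ((BallT S).biUnion (fun x => UU.biUnion (fun u => Fib x u))).card :=
          Finset.card_biUnion_le
      _ ≤ ∑ S ∈ SS, ∑ x ∈ BallT S, (UU.biUnion (fun u => Fib x u)).card :=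
          Finset.sum_le_sum (fun S _ => Finset.card_biUnion_le)
      _ ≤ ∑ S ∈ SS, ∑ x ∈ BallT S, ∑ u ∈ UU, (Fib x u).card :=
          Finset.sum_le_sum (fun S _ => Finset.sum_le_sum (fun x _ => Finset.card_biUnion_le))
  -- fiber cardinality
  set D : ℝ := Q ^ ((((k:ℝ) - m) * n : ℝ)) with hDdef
  have hD0 : 0 ≤ D := Real.rpow_nonneg hQ0.le _
  have hFibD : ∀ (x : Fin m → Fin n → F), ∀ u ∈ UU, ((Fib x u).card : ℝ) = D := by
    intro x u huU
    rw [hUU, mem_filter] at huU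
    have h : (Fib x u).card * q ^ (m * n) = q ^ (k * n) := by
      rw [hFibdef]
      have := matrix_fiber_card u huU.2 x
      rwa [hF] at this
    have hcast : ((Fib x u).card : ℝ) * Q ^ (((m*n : ℕ)):ℝ) = Q ^ (((k*n : ℕ)):ℝ) := by
      rw [Real.rpow_natCast, Real.rpow_natCast, hQdef]
      exact_mod_cast congrArg (Nat.cast : ℕ → ℝ) h
    have hD : D * Q ^ (((m*n : ℕ)):ℝ) = Q ^ (((k*n : ℕ)):ℝ) := by
      rw [hDdef, ← Real.rpow_add hQ0]
      congr 1
      push_cast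
      ring
    have hne : Q ^ (((m*n : ℕ)):ℝ) ≠ 0 := by positivity
    exact mul_right_cancel₀ hne (hcast.trans hD.symm)
  -- cardinality of UU
  have hUcard : ((UU.card : ℝ)) ≤ Q ^ ((k:ℝ) * m) := by
    have h1 : UU.card ≤ q ^ (k * m) := by
      calc UU.card ≤ Fintype.card (Fin m → Fin k → F) := by
            rw [← Finset.card_univ]; exact Finset.card_le_card (Finset.filter_subset _ _)
        _ = q ^ (k * m) := by
            rw [Fintype.card_fun, Fintype.card_fun, hF, Fintype.card_fin, Fintype.card_fin,
              ← pow_mul]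
    calc ((UU.card : ℝ)) ≤ ((q ^ (k*m) : ℕ) : ℝ) := by exact_mod_cast h1
      _ = Q ^ (((k*m : ℕ)):ℝ) := by rw [Real.rpow_natCast]; push_cast; ring
      _ = Q ^ ((k:ℝ) * m) := by congr 1; push_cast; ring
  -- cardinality of SS
  have hSScard : ((SS.card : ℝ)) ≤ Q ^ ((ℓ:ℝ) * n) := by
    have h1 : SS.card ≤ q ^ (ℓ * n) := by
      have hsub : SS ⊆ Fintype.piFinset
          (fun _ : Fin n => univ.filter (fun A : Finset F => A.card = ℓ)) := by
        intro S hs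
        rw [hSS, mem_filter] at hs
        rw [Fintype.mem_piFinset]
        intro i
        simp only [mem_filter, mem_univ, true_and]
        exact hs.2 i
      have hC : (univ.filter (fun A : Finset F => A.card = ℓ)).card = Nat.choose q ℓ := by
        have : (univ.filter (fun A : Finset F => A.card = ℓ))
            = Finset.powersetCard ℓ (univ : Finset F) := by
          ext A
          simp [Finset.mem_powersetCard_univ]
        rw [this, Finset.card_powersetCard, Finset.card_univ, hF]
      calc SS.card ≤ (Fintype.piFinset
            (fun _ : Fin n => univ.filter (fun A : Finset F => A.card = ℓ))).card :=
            Finset.card_le_card hsub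
        _ = ∏ _i : Fin n, (univ.filter (fun A : Finset F => A.card = ℓ)).card := by
            rw [Fintype.card_piFinset]
        _ = (Nat.choose q ℓ) ^ n := by rw [Finset.prod_congr rfl (fun i _ => hC)]; simp
        _ ≤ (q ^ ℓ) ^ n := Nat.pow_le_pow_left (Nat.choose_le_pow q ℓ) n
        _ = q ^ (ℓ * n) := by rw [← pow_mul]
    calc ((SS.card : ℝ)) ≤ ((q ^ (ℓ*n) : ℕ) : ℝ) := by exact_mod_cast h1
      _ = Q ^ (((ℓ*n : ℕ)):ℝ) := by rw [Real.rpow_natCast]; push_cast; ring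
      _ = Q ^ ((ℓ:ℝ) * n) := by congr 1; push_cast; ring
  -- ball cardinality
  set Bb : ℝ := 2 ^ n * (ℓ : ℝ) ^ ((R+ε) * n : ℝ) * Q ^ ((1 - (R+ε)) * (n:ℝ) : ℝ) with hBbdef
  have hBb0 : 0 ≤ Bb := by
    rw [hBbdef]; positivity
  have hBallcard : ∀ S ∈ SS, ((BallT S).card : ℝ) ≤ Bb ^ m := by
    intro S hs
    rw [hSS, mem_filter] at hs
    have hsub : BallT S ⊆ Fintype.piFinset (fun _ : Fin m =>
        univ.filter (fun v : Fin n → F => (R+ε) * n ≤ ((agr v S).card : ℝ))) := by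
      intro x hx
      rw [hBallT, mem_filter] at hx
      rw [Fintype.mem_piFinset]
      intro j
      simp only [mem_filter, mem_univ, true_and]
      exact hx.2 j
    have h1 : (BallT S).card ≤
        (univ.filter (fun v : Fin n → F => (R+ε) * n ≤ ((agr v S).card : ℝ))).card ^ m := by
      calc (BallT S).card ≤ _ := Finset.card_le_card hsub
        _ = _ := Fintype.card_piFinset _
        _ = _ ^ m := by rw [Finset.prod_const, Finset.card_univ, Fintype.card_fin]
    have h2 : ((univ.filter (fun v : Fin n → F =>
        (R+ε) * n ≤ ((agr v S).card : ℝ))).card : ℝ) ≤ Bb := by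
      have := ball_card_le (F := F) (R+ε) hl1 (by rw [hF]; exact hlq) S hs.2
      rw [hF] at this
      rw [hBbdef]
      exact this
    calc ((BallT S).card : ℝ) ≤ (((univ.filter (fun v : Fin n → F =>
          (R+ε) * n ≤ ((agr v S).card : ℝ))).card : ℝ)) ^ m := by exact_mod_cast h1
      _ ≤ Bb ^ m := pow_le_pow_left₀ (Nat.cast_nonneg _) h2 m
  -- assemble the real bound
  have hreal : ((univ.filter (fun G => ¬ P G)).card : ℝ)
      ≤ Q ^ ((ℓ:ℝ) * n) * (Bb ^ m * (Q ^ ((k:ℝ) * m) * D)) := by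
    have hc : ((univ.filter (fun G => ¬ P G)).card : ℝ)
        ≤ ∑ S ∈ SS, ∑ x ∈ BallT S, ∑ u ∈ UU, ((Fib x u).card : ℝ) := by
      calc ((univ.filter (fun G => ¬ P G)).card : ℝ)
          ≤ ((∑ S ∈ SS, ∑ x ∈ BallT S, ∑ u ∈ UU, (Fib x u).card : ℕ) : ℝ) :=
            Nat.cast_le.2 hnat
        _ = _ := by push_cast; rfl
    refine hc.trans ?_
    calc ∑ S ∈ SS, ∑ x ∈ BallT S, ∑ u ∈ UU, ((Fib x u).card : ℝ)
        = ∑ S ∈ SS, ∑ x ∈ BallT S, (UU.card : ℝ) * D := by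
          refine Finset.sum_congr rfl fun S _ => Finset.sum_congr rfl fun x _ => ?_
          rw [Finset.sum_congr rfl (fun u hu => hFibD x u hu), Finset.sum_const, nsmul_eq_mul]
      _ ≤ ∑ S ∈ SS, ∑ x ∈ BallT S, Q ^ ((k:ℝ)*m) * D := by
          refine Finset.sum_le_sum fun S _ => Finset.sum_le_sum fun x _ => ?_
          exact mul_le_mul_of_nonneg_right hUcard hD0
      _ = ∑ S ∈ SS, ((BallT S).card : ℝ) * (Q ^ ((k:ℝ)*m) * D) := by
          refine Finset.sum_congr rfl fun S _ => ?_
          rw [Finset.sum_const, nsmul_eq_mul]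
      _ ≤ ∑ S ∈ SS, Bb ^ m * (Q ^ ((k:ℝ)*m) * D) := by
          refine Finset.sum_le_sum fun S hS => ?_
          refine mul_le_mul_of_nonneg_right (hBallcard S hS) ?_
          positivity
      _ = (SS.card : ℝ) * (Bb ^ m * (Q ^ ((k:ℝ)*m) * D)) := by
          rw [Finset.sum_const, nsmul_eq_mul]
      _ ≤ Q ^ ((ℓ:ℝ) * n) * (Bb ^ m * (Q ^ ((k:ℝ)*m) * D)) := by
          refine mul_le_mul_of_nonneg_right hSScard ?_
          positivity
  -- express the bound as a single power of Q
  set β : ℝ := s * n + t * ((R+ε) * n) + (1 - (R+ε)) * n with hβdef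
  have hBbQ : Bb = Q ^ β := by
    have f1 : (2:ℝ) ^ n = Q ^ (s * (n:ℝ)) := by
      rw [h2s, Real.rpow_mul hQ0.le, Real.rpow_natCast]
    have f2 : (ℓ:ℝ) ^ ((R+ε) * (n:ℝ) : ℝ) = Q ^ (t * ((R+ε) * n)) := by
      conv_lhs => rw [hlt]
      rw [← Real.rpow_mul hQ0.le]
    rw [hBbdef, f1, f2, ← Real.rpow_add hQ0, ← Real.rpow_add hQ0, hβdef]
  have hprod : Q ^ ((ℓ:ℝ) * n) * (Bb ^ m * (Q ^ ((k:ℝ) * m) * D))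
      = Q ^ ((ℓ:ℝ) * n + β * m + ((k:ℝ) * m + ((k:ℝ) - m) * n)) := by
    have f3 : Bb ^ m = Q ^ (β * (m:ℝ)) := by
      rw [hBbQ, Real.rpow_mul hQ0.le, Real.rpow_natCast]
    rw [f3, hDdef, ← Real.rpow_add hQ0, ← Real.rpow_add hQ0, ← Real.rpow_add hQ0]
    congr 1
    ring
  -- the exponent inequality
  have hexp : (ℓ:ℝ) * n + β * m + ((k:ℝ) * m + ((k:ℝ) - m) * n)
      ≤ (n:ℝ) * k - ((n:ℝ) * ℓ)/4 := by
    rw [hβdef, hk]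
    have hse : s + t * (R+ε) - ε ≤ -(5*ε/8) := by linarith [hst]
    have e1 : (m:ℝ) * (s + t*(R+ε) - ε) ≤ (m:ℝ) * (-(5*ε/8)) :=
      mul_le_mul_of_nonneg_left hse (Nat.cast_nonneg m)
    have e15 : (m:ℝ) * (-(5*ε/8)) ≤ -(5*(ℓ:ℝ)/4) := by
      have h5 := mul_le_mul_of_nonneg_right hm (by positivity : (0:ℝ) ≤ 5*ε/8)
      have heq : (2*(ℓ:ℝ)/ε)*(5*ε/8) = 5*(ℓ:ℝ)/4 := by field_simp; try ring
      linarith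
    have e2 : (m:ℝ) * (s + t*(R+ε) - ε) * n ≤ (-(5*(ℓ:ℝ)/4)) * n :=
      mul_le_mul_of_nonneg_right (by linarith) (Nat.cast_nonneg n)
    ring_nf
    ring_nf at e2
    linarith [e2]
  have hbad_le : ((univ.filter (fun G => ¬ P G)).card : ℝ)
      ≤ Q ^ ((n:ℝ) * k - ((n:ℝ) * ℓ)/4) := by
    refine hreal.trans ?_
    rw [hprod]
    exact Real.rpow_le_rpow_of_exponent_le hQ1.le hexp
  -- total count
  have hTotR : ((Fintype.card (Matrix (Fin n) (Fin k) F)) : ℝ) = Q ^ ((n:ℝ) * k) := by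
    have h1 : Fintype.card (Matrix (Fin n) (Fin k) F) = q ^ (k * n) := by
      have h0 : Fintype.card (Matrix (Fin n) (Fin k) F)
          = Fintype.card (Fin n → Fin k → F) := rfl
      rw [h0, Fintype.card_fun, Fintype.card_fun, hF, Fintype.card_fin, Fintype.card_fin,
        ← pow_mul]
    rw [h1, hQdef]
    push_cast
    rw [← Real.rpow_natCast ((q:ℝ)) (k*n)]
    congr 1
    push_cast
    ring
  -- reduce the goal
  have hncard : ({G : Matrix (Fin n) (Fin k) F | P G}).ncard = (univ.filter P).card := by
    rw [← Set.ncard_coe_finset]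
    congr 1
    ext G
    simp
  have hsplitN := Finset.card_filter_add_card_filter_not (s := (univ : Finset (Matrix (Fin n) (Fin k) F))) (p := P)
  rw [Finset.card_univ] at hsplitN
  have hsplit : ((univ.filter P).card : ℝ)
      = ((Fintype.card (Matrix (Fin n) (Fin k) F)) : ℝ)
        - ((univ.filter (fun G => ¬ P G)).card : ℝ) := by
    have h3 : ((univ.filter P).card : ℝ) + ((univ.filter (fun G => ¬ P G)).card : ℝ)
        = ((Fintype.card (Matrix (Fin n) (Fin k) F)) : ℝ) := by
      exact_mod_cast congrArg (Nat.cast : ℕ → ℝ) hsplitN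
    linarith
  have htotpos : (0:ℝ) < ((Fintype.card (Matrix (Fin n) (Fin k) F)) : ℝ) := by
    rw [hTotR]
    positivity
  have hfin : ((univ.filter (fun G => ¬ P G)).card : ℝ)
      ≤ Q ^ (-((n:ℝ) * (ℓ:ℝ)) / 4 : ℝ) * ((Fintype.card (Matrix (Fin n) (Fin k) F)) : ℝ) := by
    rw [hTotR, ← Real.rpow_add hQ0]
    refine hbad_le.trans ?_
    apply Real.rpow_le_rpow_of_exponent_le hQ1.le
    linarith [le_refl ((n:ℝ) * k)]
  rw [hncard, hsplit, le_div_iff₀ htotpos]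
  have expand : (1 - Q ^ (-((n:ℝ) * (ℓ:ℝ)) / 4 : ℝ))
        * ((Fintype.card (Matrix (Fin n) (Fin k) F)) : ℝ)
      = ((Fintype.card (Matrix (Fin n) (Fin k) F)) : ℝ)
        - Q ^ (-((n:ℝ) * (ℓ:ℝ)) / 4 : ℝ)
          * ((Fintype.card (Matrix (Fin n) (Fin k) F)) : ℝ) := by ring
  rw [expand]
  linarith [hfin]
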